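/- The diagonal embedding of (ℤ[1/5])² into ℝ² × (ℚ₅)² (where each coordinate of ℤ[1/5] is sent to its image in ℝ and in the field ℚ₅ of 5-adic numbers) has discrete and cocompact image; that is, (ℤ[1/5])² is a cocompact lattice in ℝ² × (ℚ₅)². -/

import Mathlib

instance : Fact (Nat.Prime 5) := ⟨by norm_num⟩
def InZ5 (q : ℚ) : Prop := ∃ (a : ℤ) (n : ℕ), q = (a : ℚ) / 5 ^ n

lemma norm5 : ‖(5:ℚ_[5])‖ = (5:ℝ)⁻¹ := by
  rw [show ((5:ℚ_[5])) = ((5:ℕ):ℚ_[5]) by norm_num, Padic.norm_p]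
  norm_num

lemma exists_approx (u : ℚ_[5]) : ∃ q : ℚ, InZ5 q ∧ ‖u - (q : ℚ_[5])‖ ≤ 1 := by
  obtain ⟨n, hn⟩ := pow_unbounded_of_one_lt ‖u‖ (by norm_num : (1:ℝ) < 5)
  have h5n : (0:ℝ) < 5 ^ n := by positivity
  have hw : ‖(5:ℚ_[5]) ^ n * u‖ ≤ 1 := by
    rw [norm_mul, norm_pow, norm5]
    calc (5:ℝ)⁻¹ ^ n * ‖u‖ ≤ (5:ℝ)⁻¹ ^ n * 5 ^ n :=
          mul_le_mul_of_nonneg_left hn.le (by positivity)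
      _ = 1 := by rw [← mul_pow]; norm_num
  set z : ℤ_[5] := ⟨(5:ℚ_[5]) ^ n * u, hw⟩ with hz
  obtain ⟨a, ha⟩ := PadicInt.denseRange_intCast.exists_dist_lt z
    (show (0:ℝ) < (5:ℝ)⁻¹ ^ n by positivity)
  refine ⟨(a : ℚ) / 5 ^ n, ⟨a, n, rfl⟩, ?_⟩
  have hdist : ‖(5:ℚ_[5]) ^ n * u - (a : ℚ_[5])‖ < (5:ℝ)⁻¹ ^ n := by
    have : dist z ((a:ℤ):ℤ_[5]) = ‖(5:ℚ_[5]) ^ n * u - (a : ℚ_[5])‖ := by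
      rw [dist_eq_norm, PadicInt.norm_def]
      congr 1
    rwa [this] at ha
  have hcast : ((((a:ℚ) / 5 ^ n : ℚ)) : ℚ_[5]) = (a : ℚ_[5]) / 5 ^ n := by push_cast; ring
  rw [hcast]
  have h5ne : ((5:ℚ_[5]) ^ n) ≠ 0 := by
    apply pow_ne_zero; norm_num
  have : u - (a : ℚ_[5]) / 5 ^ n = ((5:ℚ_[5]) ^ n * u - a) / 5 ^ n := by
    field_simp
  rw [this, norm_div, norm_pow, norm5]
  rw [div_le_iff₀ (by positivity)]
  calc ‖(5:ℚ_[5]) ^ n * u - (a:ℚ_[5])‖ ≤ (5:ℝ)⁻¹ ^ n := hdist.le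
    _ = 1 * ((5:ℝ)⁻¹)^n := by ring

lemma reduce (r : ℝ) (u : ℚ_[5]) :
    ∃ q : ℚ, InZ5 q ∧ (r - (q:ℝ)) ∈ Set.Icc (0:ℝ) 1 ∧ ‖u - (q:ℚ_[5])‖ ≤ 1 := by
  obtain ⟨q0, ⟨a, n, ha⟩, hnorm⟩ := exists_approx u
  set m : ℤ := ⌊r - (q0:ℝ)⌋ with hm
  refine ⟨q0 + m, ⟨a + m * 5 ^ n, n, ?_⟩, ?_, ?_⟩
  · rw [ha]; push_cast; field_simp
  · have h1 := Int.floor_le (r - (q0:ℝ))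
    have h2 := Int.lt_floor_add_one (r - (q0:ℝ))
    constructor
    · push_cast; linarith
    · push_cast; linarith
  · have hcast : (((q0 + m : ℚ)) : ℚ_[5]) = (q0 : ℚ_[5]) + (m : ℚ_[5]) := by push_cast; ring
    rw [hcast]
    have : u - ((q0 : ℚ_[5]) + m) = (u - q0) + (-(m:ℚ_[5])) := by ring
    rw [this]
    refine le_trans (Padic.nonarchimedean _ _) (max_le hnorm ?_)
    rw [norm_neg]
    exact Padic.norm_int_le_one m

lemma int_of_norm_le (x : ℚ) (hx : InZ5 x) (h5 : ‖(x:ℚ_[5])‖ ≤ 1) : ∃ b : ℤ, x = b := by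
  obtain ⟨a, n, rfl⟩ := hx
  have h5ne : ((5:ℚ_[5]) ^ n) ≠ 0 := pow_ne_zero _ (by norm_num)
  have hc : (((a:ℚ) / 5 ^ n : ℚ) : ℚ_[5]) = (a : ℚ_[5]) / 5 ^ n := by push_cast; ring
  rw [hc, norm_div, norm_pow, norm5, div_le_iff₀ (by positivity)] at h5
  have : ‖(a : ℚ_[5])‖ ≤ (5:ℝ) ^ (-n : ℤ) := by
    rw [zpow_neg, zpow_natCast]
    calc ‖(a:ℚ_[5])‖ ≤ 1 * (5:ℝ)⁻¹ ^ n := h5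
      _ = ((5:ℝ)^n)⁻¹ := by rw [one_mul, inv_pow]
  rw [show ((5:ℝ) = ((5:ℕ):ℝ)) by norm_num, Padic.norm_int_le_pow_iff_dvd] at this
  obtain ⟨b, hb⟩ := this
  refine ⟨b, ?_⟩
  rw [hb]
  push_cast
  field_simp

noncomputable def diagZ5sq : AddSubgroup ((ℝ × ℝ) × (ℚ_[5] × ℚ_[5])) where
  carrier := {p | ∃ x y : ℚ, InZ5 x ∧ InZ5 y ∧
    p = (((x : ℝ), (y : ℝ)), ((x : ℚ_[5]), (y : ℚ_[5])))}
  zero_mem' := ⟨0, 0, ⟨0, 0, by norm_num⟩, ⟨0, 0, by norm_num⟩, by norm_num [Prod.ext_iff]⟩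
  add_mem' := by
    rintro p q ⟨x, y, ⟨a, n, ha⟩, ⟨b, m, hb⟩, rfl⟩ ⟨x', y', ⟨c, n', hc⟩, ⟨d, m', hd⟩, rfl⟩
    refine ⟨x + x', y + y', ⟨a * 5 ^ n' + c * 5 ^ n, n + n', ?_⟩,
      ⟨b * 5 ^ m' + d * 5 ^ m, m + m', ?_⟩, ?_⟩
    · rw [ha, hc]; push_cast; rw [pow_add]; field_simp
    · rw [hb, hd]; push_cast; rw [pow_add]; field_simp
    · push_cast; rfl
  neg_mem' := by
    rintro p ⟨x, y, ⟨a, n, ha⟩, ⟨b, m, hb⟩, rfl⟩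
    exact ⟨-x, -y, ⟨-a, n, by rw [ha]; push_cast; ring⟩,
      ⟨-b, m, by rw [hb]; push_cast; ring⟩, by push_cast; rfl⟩

/-- The diagonal embedding of `(ℤ[1/5])²` in `ℝ² × (ℚ₅)²` is a cocompact lattice
embedding: its image is discrete and the quotient is compact. -/
theorem stmt4 :
    DiscreteTopology diagZ5sq ∧
      CompactSpace (((ℝ × ℝ) × (ℚ_[5] × ℚ_[5])) ⧸ diagZ5sq) := by
  constructor
  · rw [discreteTopology_iff_isOpen_singleton_zero]
    have : ({0} : Set diagZ5sq) =
        (Subtype.val) ⁻¹' (Metric.ball (0 : (ℝ × ℝ) × (ℚ_[5] × ℚ_[5])) 1) := by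
      ext s
      simp only [Set.mem_singleton_iff, Set.mem_preimage, Metric.mem_ball, dist_zero_right]
      constructor
      · rintro rfl; simpa using one_pos
      · intro hs
        obtain ⟨x, y, hx, hy, hval⟩ := s.2
        rw [hval] at hs
        rw [Prod.norm_def, Prod.norm_def, Prod.norm_def] at hs
        simp only [max_lt_iff] at hs
        obtain ⟨⟨hxr, hyr⟩, hx5, hy5⟩ := hs
        obtain ⟨b, rfl⟩ := int_of_norm_le x hx hx5.le
        obtain ⟨c, rfl⟩ := int_of_norm_le y hy hy5.le
        have hb : b = 0 := by
          have h1 : |b| < 1 := by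
            rw [Real.norm_eq_abs] at hxr
            exact_mod_cast hxr
          rw [abs_lt] at h1; omega
        have hc : c = 0 := by
          have h1 : |c| < 1 := by
            rw [Real.norm_eq_abs] at hyr
            exact_mod_cast hyr
          rw [abs_lt] at h1; omega
        apply Subtype.ext
        rw [hval, hb, hc]
        norm_num
    rw [this]
    exact isOpen_induced Metric.isOpen_ball
  · set K : Set ((ℝ × ℝ) × (ℚ_[5] × ℚ_[5])) :=
      (Set.Icc (0:ℝ) 1 ×ˢ Set.Icc (0:ℝ) 1) ×ˢ
        (Metric.closedBall (0:ℚ_[5]) 1 ×ˢ Metric.closedBall (0:ℚ_[5]) 1) with hKdef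
    have hK : IsCompact K :=
      (isCompact_Icc.prod isCompact_Icc).prod
        ((isCompact_closedBall _ _).prod (isCompact_closedBall _ _))
    have hsurj : QuotientAddGroup.mk '' K =
        (Set.univ : Set (((ℝ × ℝ) × (ℚ_[5] × ℚ_[5])) ⧸ diagZ5sq)) := by
      rw [Set.eq_univ_iff_forall]
      intro c
      obtain ⟨p, rfl⟩ := QuotientAddGroup.mk_surjective c
      obtain ⟨⟨r, s⟩, u, v⟩ := p
      obtain ⟨q1, hq1, hr1, hu1⟩ := reduce r u
      obtain ⟨q2, hq2, hr2, hu2⟩ := reduce s v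
      have hg : (((q1 : ℝ), (q2 : ℝ)), ((q1 : ℚ_[5]), (q2 : ℚ_[5]))) ∈ diagZ5sq :=
        ⟨q1, q2, hq1, hq2, rfl⟩
      refine ⟨((r, s), (u, v)) - (((q1 : ℝ), (q2 : ℝ)), ((q1 : ℚ_[5]), (q2 : ℚ_[5]))), ?_, ?_⟩
      · refine ⟨⟨hr1, hr2⟩, ?_, ?_⟩ <;>
          simpa only [Metric.mem_closedBall, dist_zero_right] using (by assumption)
      · rw [QuotientAddGroup.eq]
        simpa using hg
    refine ⟨?_⟩
    rw [← hsurj]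
    exact hK.image continuous_quotient_mk'
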